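/- (Nonexistence at the critical uncertainty level, general claim) Let λ ∈ ℝ^N with λ_n ≥ 0 for all n, let I₀ = {n : λ_n = 0} be nonempty, let c ∈ ℝ^N with c_n ≥ 0 for all n, and let ε > 0 satisfy ε² = ∑_{n∈I₀} c_n² and ε² < ∑_{n=1}^N c_n². Then the feasible set {u ∈ ℝ^N : u ≥ 0, ∑_{n=1}^N c_n u_n ≥ ε‖u‖₂ + 1} is nonempty, but the infimum of ∑_{n=1}^N λ_n u_n² over this set is not attained by any u in the set. -/

import Mathlib

private lemma sqrt_sq_add_le (X z : ℝ) (hX : 0 < X) :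
    Real.sqrt (X ^ 2 + z ^ 2) ≤ X + z ^ 2 / (2 * X) := by
  rw [Real.sqrt_le_left (by positivity)]
  have h : (X + z ^ 2 / (2 * X)) ^ 2 = X ^ 2 + z ^ 2 + (z ^ 2 / (2 * X)) ^ 2 := by
    field_simp; ring
  nlinarith [sq_nonneg (z ^ 2 / (2 * X))]

set_option maxHeartbeats 1000000 in
open Classical in
/-- nonexistence at the critical uncertainty level, general
claim: with `λ ≥ 0`, `I₀ = {n : λ_n = 0}` nonempty, `c ≥ 0`, `ε > 0`,
`ε² = ∑_{I₀} c_n²` and `ε² < ∑ c_n²`, the feasible set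
`{u ≥ 0 : ∑ c_n u_n ≥ ε‖u‖₂ + 1}` is nonempty, but the infimum of `∑ λ_n u_n²`
over it is not attained. -/
theorem rab_nonexistence_critical (N : ℕ)
    (lam c : Fin N → ℝ) (hlam : ∀ n, 0 ≤ lam n) (hc : ∀ n, 0 ≤ c n)
    (hI0 : ∃ n, lam n = 0)
    (ε : ℝ) (hε : 0 < ε)
    (hcrit : ε ^ 2 = ∑ n ∈ Finset.univ.filter (fun n => lam n = 0), (c n) ^ 2)
    (hlt : ε ^ 2 < ∑ n, (c n) ^ 2) :
    ({u : Fin N → ℝ | (∀ n, 0 ≤ u n) ∧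
        ε * Real.sqrt (∑ n, (u n) ^ 2) + 1 ≤ ∑ n, c n * u n}).Nonempty ∧
    ¬ ∃ u : Fin N → ℝ,
        ((∀ n, 0 ≤ u n) ∧ ε * Real.sqrt (∑ n, (u n) ^ 2) + 1 ≤ ∑ n, c n * u n) ∧
        ∀ v : Fin N → ℝ,
          (∀ n, 0 ≤ v n) → ε * Real.sqrt (∑ n, (v n) ^ 2) + 1 ≤ ∑ n, c n * v n →
          ∑ n, lam n * (u n) ^ 2 ≤ ∑ n, lam n * (v n) ^ 2 := by
  classical
  constructor
  · -- Nonemptiness: take u = t • c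
    set B : ℝ := ∑ n, (c n) ^ 2 with hBdef
    have hB : (0:ℝ) < B := lt_trans (by positivity) hlt
    have hsB : ε < Real.sqrt B := Real.lt_sqrt_of_sq_lt hlt
    have hsBnn : (0:ℝ) ≤ Real.sqrt B := Real.sqrt_nonneg _
    have hsq : Real.sqrt B ^ 2 = B := Real.sq_sqrt hB.le
    have hg : 0 < B - ε * Real.sqrt B := by nlinarith
    set t : ℝ := (B - ε * Real.sqrt B)⁻¹ with htdef
    have ht : 0 < t := inv_pos.mpr hg
    refine ⟨fun n => t * c n, fun n => mul_nonneg ht.le (hc n), ?_⟩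
    have h1 : (∑ n, c n * (t * c n)) = t * B := by
      rw [hBdef, Finset.mul_sum]
      exact Finset.sum_congr rfl fun n _ => by ring
    have h2 : (∑ n, (t * c n) ^ 2) = t ^ 2 * B := by
      rw [hBdef, Finset.mul_sum]
      exact Finset.sum_congr rfl fun n _ => by ring
    have h3 : Real.sqrt (∑ n, (t * c n) ^ 2) = t * Real.sqrt B := by
      rw [h2, Real.sqrt_mul (sq_nonneg t), Real.sqrt_sq ht.le]
    rw [h1, h3]
    have : t * (B - ε * Real.sqrt B) = 1 := inv_mul_cancel₀ hg.ne'
    nlinarith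
  · -- Nonexistence of a minimizer
    rintro ⟨u, ⟨hupos, hufeas⟩, hmin⟩
    set F : Finset (Fin N) := Finset.univ.filter (fun n => lam n = 0) with hFdef
    have hsplit : ∀ f : Fin N → ℝ,
        (∑ n ∈ F, f n) + (∑ n ∈ Finset.univ.filter (fun n => ¬ lam n = 0), f n)
          = ∑ n, f n := fun f =>
      Finset.sum_filter_add_sum_filter_not Finset.univ (fun n => lam n = 0) f
    set Off : Finset (Fin N) := Finset.univ.filter (fun n => ¬ lam n = 0) with hOffdef
    -- Step 1: u has a nonzero component off I₀
    have hstep1 : ∃ m, lam m ≠ 0 ∧ u m ≠ 0 := by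
      by_contra h
      push_neg at h
      have hz : ∀ n ∈ Off, c n * u n = 0 := by
        intro n hn
        rw [hOffdef, Finset.mem_filter] at hn
        rw [h n hn.2, mul_zero]
      have hsum : (∑ n, c n * u n) = ∑ n ∈ F, c n * u n := by
        rw [← hsplit (fun n => c n * u n), Finset.sum_eq_zero hz, add_zero]
      have hCS : (∑ n ∈ F, c n * u n)
          ≤ Real.sqrt (∑ n ∈ F, (c n) ^ 2) * Real.sqrt (∑ n ∈ F, (u n) ^ 2) :=
        Real.sum_mul_le_sqrt_mul_sqrt F c u
      have hFc : Real.sqrt (∑ n ∈ F, (c n) ^ 2) = ε := by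
        rw [← hcrit, Real.sqrt_sq hε.le]
      have hmono : Real.sqrt (∑ n ∈ F, (u n) ^ 2) ≤ Real.sqrt (∑ n, (u n) ^ 2) :=
        Real.sqrt_le_sqrt (Finset.sum_le_sum_of_subset_of_nonneg
          (Finset.filter_subset _ _) (fun n _ _ => sq_nonneg _))
      have : (∑ n, c n * u n) ≤ ε * Real.sqrt (∑ n, (u n) ^ 2) := by
        rw [hsum, ← hFc]
        exact hCS.trans (mul_le_mul_of_nonneg_left hmono (Real.sqrt_nonneg _))
      linarith
    obtain ⟨m, hm1, hm2⟩ := hstep1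
    have hlm : 0 < lam m := lt_of_le_of_ne (hlam m) (Ne.symm hm1)
    have hmOff : m ∈ Off := by rw [hOffdef, Finset.mem_filter]; exact ⟨Finset.mem_univ m, hm1⟩
    -- key quantities
    set sb : ℝ := ∑ n ∈ Off, (u n) ^ 2 with hsbdef
    have hsb : 0 < sb := by
      refine Finset.sum_pos' (fun n _ => sq_nonneg _) ⟨m, hmOff, ?_⟩
      positivity
    set na : ℝ := Real.sqrt (∑ n ∈ F, (u n) ^ 2) with hnadef
    set nu : ℝ := Real.sqrt (∑ n, (u n) ^ 2) with hnudef
    have hna : 0 ≤ na := Real.sqrt_nonneg _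
    have hFsum : (0:ℝ) ≤ ∑ n ∈ F, (u n) ^ 2 := Finset.sum_nonneg fun n _ => sq_nonneg _
    have hnasq : na ^ 2 = ∑ n ∈ F, (u n) ^ 2 := Real.sq_sqrt hFsum
    have hnalt : na < nu := by
      rw [hnadef, hnudef]
      apply Real.sqrt_lt_sqrt hFsum
      have := hsplit (fun n => (u n) ^ 2)
      linarith
    set M : ℝ := ε * (nu - na) with hMdef
    have hM : 0 < M := mul_pos hε (by linarith)
    set S : ℝ := ∑ n ∈ Off, c n * u n with hSdef
    have hS : 0 ≤ S := Finset.sum_nonneg fun n _ => mul_nonneg (hc n) (hupos n)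
    set T : ℝ := max 1 (sb / M) with hTdef
    have hT1 : (1:ℝ) ≤ T := le_max_left _ _
    have hT : 0 < T := lt_of_lt_of_le one_pos hT1
    have hTM : sb ≤ M * T := by
      have : sb / M ≤ T := le_max_right _ _
      calc sb = (sb / M) * M := by field_simp
        _ ≤ T * M := mul_le_mul_of_nonneg_right this hM.le
        _ = M * T := mul_comm _ _
    set δ : ℝ := min (1/2) (M / (2 * (S + 1))) with hδdef
    have hδpos : 0 < δ := lt_min (by norm_num) (by positivity)
    have hδhalf : δ ≤ 1/2 := min_le_left _ _
    have hδS : δ * S ≤ M / 2 := by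
      have h1 : δ ≤ M / (2 * (S + 1)) := min_le_right _ _
      have h2 : δ * S ≤ (M / (2 * (S + 1))) * S := mul_le_mul_of_nonneg_right h1 hS
      have h3 : (M / (2 * (S + 1))) * S ≤ M / 2 := by
        rw [div_mul_eq_mul_div, div_le_div_iff₀ (by positivity) (by norm_num)]
        nlinarith
      linarith
    -- the perturbed vector
    set v : Fin N → ℝ := fun n => if lam n = 0 then u n + T * c n else (1 - δ) * u n
      with hvdef
    have hvpos : ∀ n, 0 ≤ v n := by
      intro n
      rw [hvdef]
      by_cases hn : lam n = 0
      · simp only [hn, if_true]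
        exact add_nonneg (hupos n) (mul_nonneg hT.le (hc n))
      · simp only [hn, if_false]
        exact mul_nonneg (by linarith) (hupos n)
    have hvF : ∀ n ∈ F, v n = u n + T * c n := by
      intro n hn
      rw [hFdef, Finset.mem_filter] at hn
      simp [hvdef, hn.2]
    have hvOff : ∀ n ∈ Off, v n = (1 - δ) * u n := by
      intro n hn
      rw [hOffdef, Finset.mem_filter] at hn
      simp [hvdef, hn.2]
    -- sum c v
    have hcu_split : (∑ n ∈ F, c n * u n) + S = ∑ n, c n * u n := hsplit _
    have hsumcv : (∑ n, c n * v n)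
        = (∑ n, c n * u n) + T * ε ^ 2 - δ * S := by
      rw [← hsplit (fun n => c n * v n)]
      have e1 : (∑ n ∈ F, c n * v n)
          = (∑ n ∈ F, c n * u n) + T * (∑ n ∈ F, (c n) ^ 2) := by
        rw [Finset.mul_sum, ← Finset.sum_add_distrib]
        refine Finset.sum_congr rfl fun n hn => ?_
        rw [hvF n hn]; ring
      have e2 : (∑ n ∈ Off, c n * v n) = (1 - δ) * S := by
        rw [hSdef, Finset.mul_sum]
        refine Finset.sum_congr rfl fun n hn => ?_
        rw [hvOff n hn]; ring
      rw [e1, e2, ← hcrit]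
      linarith
    -- bound on ∑ v²
    have hFCS : (∑ n ∈ F, u n * c n) ≤ na * ε := by
      have := Real.sum_mul_le_sqrt_mul_sqrt F u c
      have hFc : Real.sqrt (∑ n ∈ F, (c n) ^ 2) = ε := by
        rw [← hcrit, Real.sqrt_sq hε.le]
      rw [hFc] at this
      exact this
    have hsumv2 : (∑ n, (v n) ^ 2) ≤ (na + T * ε) ^ 2 + sb := by
      rw [← hsplit (fun n => (v n) ^ 2)]
      have e1 : (∑ n ∈ F, (v n) ^ 2)
          = (∑ n ∈ F, (u n) ^ 2) + 2 * T * (∑ n ∈ F, u n * c n)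
            + T ^ 2 * (∑ n ∈ F, (c n) ^ 2) := by
        rw [Finset.mul_sum, Finset.mul_sum, ← Finset.sum_add_distrib,
          ← Finset.sum_add_distrib]
        refine Finset.sum_congr rfl fun n hn => ?_
        rw [hvF n hn]; ring
      have e2 : (∑ n ∈ Off, (v n) ^ 2) = (1 - δ) ^ 2 * sb := by
        rw [hsbdef, Finset.mul_sum]
        refine Finset.sum_congr rfl fun n hn => ?_
        rw [hvOff n hn]; ring
      rw [e1, e2, ← hcrit, ← hnasq]
      have h4 : (1 - δ) ^ 2 * sb ≤ sb := by
        nlinarith [mul_nonneg (mul_nonneg hδpos.le (by linarith : (0:ℝ) ≤ 2 - δ)) hsb.le]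
      have h5 : 2 * T * (∑ n ∈ F, u n * c n) ≤ 2 * T * (na * ε) :=
        mul_le_mul_of_nonneg_left hFCS (by positivity)
      have hexp : (na + T * ε) ^ 2 = na ^ 2 + 2 * T * (na * ε) + T ^ 2 * ε ^ 2 := by ring
      linarith
    have hnv : Real.sqrt (∑ n, (v n) ^ 2) ≤ na + T * ε + sb / (2 * (T * ε)) := by
      have hX : 0 < na + T * ε := by positivity
      have h1 : Real.sqrt (∑ n, (v n) ^ 2)
          ≤ Real.sqrt ((na + T * ε) ^ 2 + Real.sqrt sb ^ 2) := by
        apply Real.sqrt_le_sqrt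
        rw [Real.sq_sqrt hsb.le]
        exact hsumv2
      rw [Real.sq_sqrt hsb.le] at h1
      have h2 := sqrt_sq_add_le (na + T * ε) (Real.sqrt sb) hX
      rw [Real.sq_sqrt hsb.le] at h2
      have h3 : sb / (2 * (na + T * ε)) ≤ sb / (2 * (T * ε)) := by
        apply div_le_div_of_nonneg_left hsb.le (by positivity)
        nlinarith
      linarith
    -- feasibility of v
    have hvfeas : ε * Real.sqrt (∑ n, (v n) ^ 2) + 1 ≤ ∑ n, c n * v n := by
      have h1 : ε * Real.sqrt (∑ n, (v n) ^ 2)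
          ≤ ε * na + T * ε ^ 2 + sb / (2 * T) := by
        have := mul_le_mul_of_nonneg_left hnv hε.le
        have heq : ε * (sb / (2 * (T * ε))) = sb / (2 * T) := by
          field_simp
        nlinarith
      have h2 : sb / (2 * T) ≤ M / 2 := by
        rw [div_le_div_iff₀ (by positivity) (by norm_num)]
        nlinarith
      have h3 : ε * nu + 1 ≤ ∑ n, c n * u n := hufeas
      rw [hsumcv]
      have : ε * na + M = ε * nu := by rw [hMdef]; ring
      linarith
    -- objective strictly decreases
    have hobjF : ∀ (w : Fin N → ℝ), (∑ n ∈ F, lam n * (w n) ^ 2) = 0 := by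
      intro w
      refine Finset.sum_eq_zero fun n hn => ?_
      rw [hFdef, Finset.mem_filter] at hn
      rw [hn.2, zero_mul]
    have hobju : (∑ n, lam n * (u n) ^ 2) = ∑ n ∈ Off, lam n * (u n) ^ 2 := by
      rw [← hsplit (fun n => lam n * (u n) ^ 2), hobjF, zero_add]
    have hobjv : (∑ n, lam n * (v n) ^ 2)
        = (1 - δ) ^ 2 * ∑ n ∈ Off, lam n * (u n) ^ 2 := by
      rw [← hsplit (fun n => lam n * (v n) ^ 2), hobjF, zero_add, Finset.mul_sum]
      refine Finset.sum_congr rfl fun n hn => ?_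
      rw [hvOff n hn]; ring
    have hV : 0 < ∑ n ∈ Off, lam n * (u n) ^ 2 := by
      refine Finset.sum_pos' (fun n _ => mul_nonneg (hlam n) (sq_nonneg _)) ⟨m, hmOff, ?_⟩
      positivity
    have hle := hmin v hvpos hvfeas
    rw [hobju, hobjv] at hle
    nlinarith [mul_pos (mul_pos hδpos (show (0:ℝ) < 2 - δ by linarith)) hV]
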